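/- Let $B$ be a ring and $r \in \mathbb{N}$, with $L, J_d \subseteq B[p_1,\dots,p_r]$ as usual ($L$ generated by $p_1,\dots,p_r$; $J_d$ generated by $s_j$ for $j \geq d$, where $s_0=1$, $s_j=0$ for $j<0$, $s_j=-\sum_{i=1}^r p_i s_{j-i}$ for $j>0$). Then for each $d \in \mathbb{Z}$ there exists $s \in \mathbb{N}$ such that $L^s \cdot J_d \subseteq J_{d+1}$. -/

import Mathlib

open scoped Pointwise

noncomputable section

/-- The (possibly noncommutative) polynomial ring `B[p₁,…,p_r]` over a ring `B`,
with `r` central variables, realized as the monoid algebra of `Fin r →₀ ℕ`. -/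
abbrev NCPoly (B : Type*) [Ring B] (r : ℕ) := AddMonoidAlgebra B (Fin r →₀ ℕ)

/-- The variable `p_{i+1}` of `B[p₁,…,p_r]`. -/
noncomputable def pvar (B : Type*) [Ring B] (r : ℕ) (i : Fin r) : NCPoly B r :=
  AddMonoidAlgebra.single (Finsupp.single i 1) (1 : B)

/-- The two-sided ideal `J_d` generated by the `s j` with `j ≥ d`. -/
noncomputable def Jideal (B : Type*) [Ring B] (r : ℕ) (s : ℤ → NCPoly B r) (d : ℤ) :
    TwoSidedIdeal (NCPoly B r) :=
  TwoSidedIdeal.span {x | ∃ j : ℤ, d ≤ j ∧ x = s j}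

/-- The two-sided ideal `L` generated by the variables `p₁,…,p_r`. -/
noncomputable def Lideal (B : Type*) [Ring B] (r : ℕ) : TwoSidedIdeal (NCPoly B r) :=
  TwoSidedIdeal.span (Set.range (pvar B r))

/-- Product of two two-sided ideals: the two-sided ideal generated by products. -/
noncomputable def imul {R : Type*} [Ring R] (I J : TwoSidedIdeal R) : TwoSidedIdeal R :=
  TwoSidedIdeal.span ((I : Set R) * (J : Set R))

/-- Powers of a two-sided ideal (`I ^ 0` is the unit ideal). -/
noncomputable def ipow {R : Type*} [Ring R] (I : TwoSidedIdeal R) : ℕ → TwoSidedIdeal R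
  | 0 => ⊤
  | n + 1 => imul (ipow I n) I

open MvPolynomial

abbrev R0 (r : ℕ) := MvPolynomial (Fin r) ℤ

noncomputable def sigAux (r : ℕ) : ℕ → R0 r
  | 0 => 1
  | (n+1) => -∑ i : Fin r,
      if h : (i:ℕ) + 1 ≤ n + 1 then X i * sigAux r (n + 1 - ((i:ℕ)+1)) else 0
  termination_by n => n
  decreasing_by omega

noncomputable def sig (r : ℕ) (j : ℤ) : R0 r := if j < 0 then 0 else sigAux r j.toNat

lemma sig_zero (r : ℕ) : sig r 0 = 1 := by simp [sig, sigAux]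

lemma sig_neg (r : ℕ) {j : ℤ} (h : j < 0) : sig r j = 0 := by simp [sig, h]

lemma sig_rec (r : ℕ) {j : ℤ} (h : 0 < j) :
    sig r j = -∑ i : Fin r, X i * sig r (j - ((i:ℕ) + 1)) := by
  obtain ⟨n, hn⟩ : ∃ n : ℕ, j.toNat = n + 1 := ⟨j.toNat - 1, by omega⟩
  have hj : sig r j = sigAux r (n+1) := by rw [sig, if_neg (by omega), hn]
  rw [hj, sigAux]
  congr 1
  apply Finset.sum_congr rfl
  intro i _
  by_cases hle : (i:ℕ) + 1 ≤ n + 1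
  · rw [dif_pos hle]
    congr 1
    have h1 : (0:ℤ) ≤ j - ((i:ℕ)+1) := by omega
    rw [sig, if_neg (by omega)]
    congr 1
    omega
  · rw [dif_neg hle, sig_neg r (by omega), mul_zero]

noncomputable def Fpoly (r : ℕ) : Polynomial (R0 r) :=
  1 + ∑ i : Fin r, Polynomial.C (X i) * Polynomial.X ^ ((i:ℕ)+1)

noncomputable def Sser (r : ℕ) : PowerSeries (R0 r) := PowerSeries.mk fun n => sig r n

lemma FS_eq_one (r : ℕ) : ((Fpoly r : Polynomial (R0 r)) : PowerSeries (R0 r)) * Sser r = 1 := by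
  have hF : ((Fpoly r : Polynomial (R0 r)) : PowerSeries (R0 r)) =
      1 + ∑ i : Fin r, PowerSeries.C (X i) * PowerSeries.X ^ ((i:ℕ)+1) := by
    rw [Fpoly]
    push_cast [Polynomial.coe_add, Polynomial.coe_one]
    congr 1
    rw [show ((((∑ i : Fin r, Polynomial.C (X i) * Polynomial.X ^ ((i:ℕ)+1)) : Polynomial (R0 r))) :
        PowerSeries (R0 r)) = Polynomial.coeToPowerSeries.ringHom
          (∑ i : Fin r, Polynomial.C (X i) * Polynomial.X ^ ((i:ℕ)+1)) from rfl, map_sum]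
    apply Finset.sum_congr rfl
    intro i _
    exact (Polynomial.coe_mul (Polynomial.C (X i)) (Polynomial.X ^ ((i:ℕ)+1))).trans
      (by rw [Polynomial.coe_C, Polynomial.coe_pow, Polynomial.coe_X])
  refine PowerSeries.ext fun n => ?_
  rw [hF, add_mul, one_mul, Finset.sum_mul, map_add, map_sum]
  have hterm : ∀ i : Fin r, (PowerSeries.coeff n)
      (PowerSeries.C (X i) * PowerSeries.X ^ ((i:ℕ)+1) * Sser r)
      = X i * sig r ((n:ℤ) - ((i:ℕ)+1)) := by
    intro i
    rw [mul_assoc, PowerSeries.coeff_C_mul, PowerSeries.coeff_X_pow_mul']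
    congr 1
    by_cases hle : (i:ℕ) + 1 ≤ n
    · rw [if_pos hle]
      rw [Sser, PowerSeries.coeff_mk]
      congr 1
      omega
    · rw [if_neg hle, sig_neg r (by omega)]
  simp only [hterm]
  have h1 : (PowerSeries.coeff n) (Sser r) = sig r n := by simp [Sser]
  rcases Nat.eq_zero_or_pos n with hn | hn
  · subst hn
    have h2 : ∀ i : Fin r, X (R := ℤ) i * sig r ((0:ℕ) - ((i:ℕ)+1)) = 0 := by
      intro i
      rw [sig_neg r (by omega), mul_zero]
    simp only [h2, Finset.sum_const_zero, add_zero, h1]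
    simp [sig_zero]
  · rw [h1, PowerSeries.coeff_one, if_neg (by omega), sig_rec r (by exact_mod_cast hn)]
    exact neg_add_cancel _

noncomputable def J0 (r : ℕ) (d : ℤ) : Ideal (R0 r) :=
  Ideal.span {x | ∃ j : ℤ, d ≤ j ∧ x = sig r j}

noncomputable def Gpoly (r : ℕ) (e : ℤ) : Polynomial (R0 r) :=
  ∑ j ∈ Finset.range (e.toNat + 1), Polynomial.C (sig r j) * Polynomial.X ^ j

lemma Gpoly_coeff (r : ℕ) (e : ℤ) (b : ℕ) :
    (Gpoly r e).coeff b = if b ≤ e.toNat then sig r b else 0 := by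
  rw [Gpoly, Polynomial.finset_sum_coeff]
  simp only [Polynomial.coeff_C_mul, Polynomial.coeff_X_pow, mul_ite, mul_one, mul_zero]
  rw [Finset.sum_ite_eq (Finset.range (e.toNat+1)) b (fun j => sig r (j : ℤ))]
  simp [Nat.lt_succ_iff]

lemma sig_mem_J0 (r : ℕ) (e : ℤ) {b : ℤ} (hb : e + 1 ≤ b) : sig r b ∈ J0 r (e+1) :=
  Ideal.subset_span ⟨b, hb, rfl⟩

lemma coeff_FG_sub_mem (r : ℕ) (e : ℤ) (n : ℕ) :
    (Fpoly r * Gpoly r e).coeff n - (1 : Polynomial (R0 r)).coeff n ∈ J0 r (e+1) := by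
  have hdiff : ∀ b : ℕ, (PowerSeries.coeff b)
      (Sser r - ((Gpoly r e : Polynomial (R0 r)) : PowerSeries (R0 r))) ∈ J0 r (e+1) := by
    intro b
    rw [map_sub, Polynomial.coeff_coe, Gpoly_coeff]
    by_cases hb : b ≤ e.toNat
    · rw [if_pos hb]
      simp [Sser]
    · rw [if_neg hb, sub_zero]
      have h1 : (PowerSeries.coeff b) (Sser r) = sig r b := by simp [Sser]
      rw [h1]
      refine sig_mem_J0 r e ?_
      have := Int.self_le_toNat e
      omega
  have key : ((Fpoly r : Polynomial (R0 r)) : PowerSeries (R0 r)) *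
      (Sser r - ((Gpoly r e : Polynomial (R0 r)) : PowerSeries (R0 r)))
      = 1 - (((Fpoly r * Gpoly r e : Polynomial (R0 r))) : PowerSeries (R0 r)) := by
    rw [mul_sub, FS_eq_one, Polynomial.coe_mul]
  have hmem : ∀ b : ℕ, (PowerSeries.coeff b)
      (((Fpoly r : Polynomial (R0 r)) : PowerSeries (R0 r)) *
        (Sser r - ((Gpoly r e : Polynomial (R0 r)) : PowerSeries (R0 r)))) ∈ J0 r (e+1) := by
    intro b
    rw [PowerSeries.coeff_mul]
    refine Ideal.sum_mem _ fun p _ => Ideal.mul_mem_left _ _ (hdiff p.2)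
  have := hmem n
  rw [key, map_sub, Polynomial.coeff_coe, PowerSeries.coeff_one] at this
  have h2 : (1 : Polynomial (R0 r)).coeff n = if n = 0 then 1 else 0 := by
    simp [Polynomial.coeff_one]
  rw [h2]
  simpa using (J0 r (e+1)).neg_mem this

lemma Fpoly_coeff_succ (r : ℕ) (i : Fin r) : (Fpoly r).coeff ((i:ℕ)+1) = X i := by
  rw [Fpoly, Polynomial.coeff_add, Polynomial.finset_sum_coeff]
  simp only [Polynomial.coeff_C_mul, Polynomial.coeff_X_pow, mul_ite, mul_one, mul_zero]
  rw [Polynomial.coeff_one, if_neg (by omega)]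
  rw [Finset.sum_eq_single i]
  · simp
  · intro j _ hj
    rw [if_neg]
    intro hc
    exact hj (by ext; omega)
  · intro h
    exact absurd (Finset.mem_univ i) h

lemma comm_key (r : ℕ) (e : ℤ) :
    ∃ m : ℕ, Ideal.span (Set.range (X : Fin r → R0 r)) ^ m ≤ J0 r (e+1) := by
  set J := J0 r (e+1)
  set π := Ideal.Quotient.mk J
  have hFG : (Fpoly r).map π * (Gpoly r e).map π = 1 := by
    rw [← Polynomial.map_mul]
    refine Polynomial.ext fun n => ?_
    rw [Polynomial.coeff_map]
    have h1 : (Polynomial.map π (1 : Polynomial (R0 r))).coeff n = π ((1 : Polynomial (R0 r)).coeff n) := by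
      rw [Polynomial.coeff_map]
    rw [Polynomial.map_one] at h1
    rw [h1]
    exact Ideal.Quotient.eq.mpr (coeff_FG_sub_mem r e n)
  have hunit : IsUnit ((Fpoly r).map π) := IsUnit.of_mul_eq_one _ hFG
  have hnil : ∀ i : Fin r, X i ∈ J.radical := by
    intro i
    have h2 := (Polynomial.isUnit_iff_coeff_isUnit_isNilpotent.mp hunit).2 ((i:ℕ)+1) (by omega)
    rw [Polynomial.coeff_map, Fpoly_coeff_succ] at h2
    obtain ⟨k, hk⟩ := h2
    have : π (X i ^ k) = 0 := by rw [map_pow]; exact hk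
    exact Ideal.mem_radical_of_pow_mem (Ideal.le_radical (Ideal.Quotient.eq_zero_iff_mem.mp this))
  have hle : Ideal.span (Set.range (X : Fin r → R0 r)) ≤ J.radical := by
    rw [Ideal.span_le]
    rintro _ ⟨i, rfl⟩
    exact hnil i
  exact Ideal.exists_pow_le_of_le_radical_of_fg hle (Submodule.fg_span (Set.finite_range X))

abbrev NCPoly' (B : Type*) [Ring B] (r : ℕ) := AddMonoidAlgebra B (Fin r →₀ ℕ)

noncomputable def Phi (B : Type*) [Ring B] (r : ℕ) : R0 r →+* NCPoly' B r :=
  AddMonoidAlgebra.liftNCRingHom (Int.castRingHom (NCPoly' B r))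
    (AddMonoidAlgebra.of B (Fin r →₀ ℕ)) (fun x y => Int.cast_commute x _)

lemma Phi_single (B : Type*) [Ring B] (r : ℕ) (a : Fin r →₀ ℕ) (n : ℤ) :
    Phi B r (AddMonoidAlgebra.single a n) = AddMonoidAlgebra.single a (n : B) := by
  rw [Phi, AddMonoidAlgebra.liftNCRingHom]
  show AddMonoidAlgebra.liftNC _ _ (AddMonoidAlgebra.single a n) = _
  rw [AddMonoidAlgebra.liftNC_single]
  show ((n : ℤ) : NCPoly' B r) * AddMonoidAlgebra.single a 1 = _
  rw [← zsmul_eq_mul, AddMonoidAlgebra.smul_single]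
  congr 1
  simp

lemma Phi_X (B : Type*) [Ring B] (r : ℕ) (i : Fin r) :
    Phi B r (X i) = AddMonoidAlgebra.single (Finsupp.single i 1) (1 : B) := by
  have : (X i : R0 r) = AddMonoidAlgebra.single (Finsupp.single i 1) (1 : ℤ) := by
    rw [X, MvPolynomial.monomial]
    rfl
  rw [this, Phi_single]
  norm_num

lemma single_central_commute {B : Type*} [Ring B] {r : ℕ} (a : Fin r →₀ ℕ) (c : B)
    (hc : ∀ u : B, c * u = u * c) (y : NCPoly' B r) :
    AddMonoidAlgebra.single a c * y = y * AddMonoidAlgebra.single a c := by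
  induction y using AddMonoidAlgebra.induction_linear with
  | zero => simp
  | add f g hf hg => rw [mul_add, add_mul, hf, hg]
  | single b u =>
      rw [AddMonoidAlgebra.single_mul_single, AddMonoidAlgebra.single_mul_single,
        add_comm, hc]

lemma Phi_central (B : Type*) [Ring B] (r : ℕ) (x : R0 r) (y : NCPoly' B r) :
    Phi B r x * y = y * Phi B r x := by
  induction x using MvPolynomial.induction_on generalizing y with
  | C n =>
      have hC : Phi B r (MvPolynomial.C n) = AddMonoidAlgebra.single 0 (n : B) := by
        rw [show (MvPolynomial.C n : R0 r) = AddMonoidAlgebra.single 0 n from rfl, Phi_single]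
      rw [hC]
      exact single_central_commute 0 _ (fun u => (Int.cast_commute n u).eq) y
  | add p q hp hq => rw [map_add, add_mul, mul_add, hp, hq]
  | mul_X p i hp =>
      rw [map_mul, Phi_X]
      have hv := single_central_commute (B := B) (Finsupp.single i 1) 1
        (fun u => by rw [one_mul, mul_one])
      calc Phi B r p * AddMonoidAlgebra.single (Finsupp.single i 1) (1:B) * y
          = Phi B r p * (AddMonoidAlgebra.single (Finsupp.single i 1) (1:B) * y) := by
            rw [mul_assoc]
        _ = Phi B r p * (y * AddMonoidAlgebra.single (Finsupp.single i 1) (1:B)) := by rw [hv]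
        _ = (Phi B r p * y) * AddMonoidAlgebra.single (Finsupp.single i 1) (1:B) := by
            rw [mul_assoc]
        _ = (y * Phi B r p) * AddMonoidAlgebra.single (Finsupp.single i 1) (1:B) := by rw [hp]
        _ = y * (Phi B r p * AddMonoidAlgebra.single (Finsupp.single i 1) (1:B)) := by
            rw [mul_assoc]



lemma Phi_sig (B : Type*) [Ring B] (r : ℕ) (s : ℤ → NCPoly B r)
    (hs0 : s 0 = 1) (hsneg : ∀ j : ℤ, j < 0 → s j = 0)
    (hsrec : ∀ j : ℤ, 0 < j → s j = -∑ i : Fin r, pvar B r i * s (j - ((i : ℕ) + 1)))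
    (j : ℤ) : Phi B r (sig r j) = s j := by
  have key : ∀ n : ℕ, ∀ j : ℤ, j ≤ n → Phi B r (sig r j) = s j := by
    intro n
    induction n using Nat.strong_induction_on with
    | _ n ih =>
      intro j hj
      rcases lt_trichotomy j 0 with h | h | h
      · rw [sig_neg r h, map_zero, hsneg j h]
      · subst h
        rw [sig_zero, map_one, hs0]
      · have hn : 1 ≤ n := by omega
        rw [sig_rec r h, hsrec j h, map_neg, map_sum]
        congr 1
        apply Finset.sum_congr rfl
        intro i _
        rw [map_mul, Phi_X, ih (n-1) (by omega) _ (by omega)]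
        rfl
  refine key j.toNat j ?_
  exact Int.self_le_toNat j

lemma Phi_mem_Jideal (B : Type*) [Ring B] (r : ℕ) (s : ℤ → NCPoly B r)
    (hs0 : s 0 = 1) (hsneg : ∀ j : ℤ, j < 0 → s j = 0)
    (hsrec : ∀ j : ℤ, 0 < j → s j = -∑ i : Fin r, pvar B r i * s (j - ((i : ℕ) + 1)))
    (e : ℤ) {y : R0 r} (hy : y ∈ J0 r e) : Phi B r y ∈ Jideal B r s e := by
  refine Submodule.span_induction ?_ ?_ ?_ ?_ hy
  · rintro x ⟨j, hj, rfl⟩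
    rw [Phi_sig B r s hs0 hsneg hsrec]
    exact TwoSidedIdeal.subset_span ⟨j, hj, rfl⟩
  · simp
  · intro a b _ _ ha hb
    rw [map_add]
    exact TwoSidedIdeal.add_mem _ ha hb
  · intro c x _ hx
    rw [smul_eq_mul, map_mul]
    exact TwoSidedIdeal.mul_mem_left _ _ _ hx

noncomputable def PhiIdeal (B : Type*) [Ring B] {r : ℕ} (T : Ideal (R0 r)) :
    Ideal (NCPoly B r) := Ideal.span (Phi B r '' (T : Set (R0 r)))

lemma PhiIdeal_mul_right (B : Type*) [Ring B] {r : ℕ} (T : Ideal (R0 r))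
    {x : NCPoly B r} (y : NCPoly B r) (hx : x ∈ PhiIdeal B T) :
    x * y ∈ PhiIdeal B T := by
  refine Submodule.span_induction ?_ ?_ ?_ ?_ hx
  · rintro _ ⟨a, ha, rfl⟩
    rw [Phi_central]
    exact Ideal.mul_mem_left _ _ (Ideal.subset_span ⟨a, ha, rfl⟩)
  · rw [zero_mul]; exact zero_mem _
  · intro a b _ _ ha hb
    rw [add_mul]
    exact add_mem ha hb
  · intro c a _ ha
    rw [smul_eq_mul, mul_assoc]
    exact Ideal.mul_mem_left _ _ ha

noncomputable def PhiTwo (B : Type*) [Ring B] {r : ℕ} (T : Ideal (R0 r)) :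
    TwoSidedIdeal (NCPoly B r) :=
  TwoSidedIdeal.mk' (PhiIdeal B T : Set (NCPoly B r))
    (zero_mem _) (fun ha hb => add_mem ha hb) (fun ha => neg_mem ha)
    (fun {x y} hy => Ideal.mul_mem_left _ _ hy)
    (fun {x y} hx => PhiIdeal_mul_right B T y hx)

lemma mem_PhiTwo (B : Type*) [Ring B] {r : ℕ} (T : Ideal (R0 r)) (x : NCPoly B r) :
    x ∈ PhiTwo B T ↔ x ∈ PhiIdeal B T := TwoSidedIdeal.mem_mk' _ _ _ _ _ _ x

lemma PhiIdeal_mul_mem (B : Type*) [Ring B] {r : ℕ} (T U : Ideal (R0 r)) {x y : NCPoly B r}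
    (hx : x ∈ PhiIdeal B T) (hy : y ∈ PhiIdeal B U) : x * y ∈ PhiIdeal B (T * U) := by
  refine Submodule.span_induction ?_ ?_ ?_ ?_ hx
  · rintro _ ⟨t, ht, rfl⟩
    refine Submodule.span_induction ?_ ?_ ?_ ?_ hy
    · rintro _ ⟨u, hu, rfl⟩
      rw [← map_mul]
      exact Ideal.subset_span ⟨t * u, Ideal.mul_mem_mul ht hu, rfl⟩
    · rw [mul_zero]; exact zero_mem _
    · intro a b _ _ hpa hpb; rw [mul_add]; exact add_mem hpa hpb
    · intro c z _ hz
      rw [smul_eq_mul, show Phi B r t * (c * z) = c * (Phi B r t * z) by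
        rw [← mul_assoc, Phi_central, mul_assoc]]
      exact Ideal.mul_mem_left _ _ hz
  · rw [zero_mul]; exact zero_mem _
  · intro a b _ _ hpa hpb; rw [add_mul]; exact add_mem hpa hpb
  · intro c z _ hz; rw [smul_eq_mul, mul_assoc]; exact Ideal.mul_mem_left _ _ hz

lemma ipow_le_PhiTwo (B : Type*) [Ring B] (r : ℕ) (m : ℕ) :
    ipow (Lideal B r) m ≤ PhiTwo B ((Ideal.span (Set.range (X : Fin r → R0 r)))^m) := by
  induction m with
  | zero =>
      intro x _
      rw [mem_PhiTwo]
      have h1 : (1 : NCPoly B r) ∈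
          PhiIdeal B ((Ideal.span (Set.range (X : Fin r → R0 r)))^0) :=
        Ideal.subset_span ⟨1, by simp, map_one _⟩
      simpa using Ideal.mul_mem_left _ x h1
  | succ m ih =>
      show imul (ipow (Lideal B r) m) (Lideal B r) ≤ _
      intro x hx
      refine TwoSidedIdeal.mem_span_iff.mp hx _ ?_
      rintro z ⟨a, ha, b, hb, rfl⟩
      rw [SetLike.mem_coe, mem_PhiTwo]
      have hb' : b ∈ PhiIdeal B (Ideal.span (Set.range (X : Fin r → R0 r))) := by
        have hb2 : b ∈ PhiTwo B (Ideal.span (Set.range (X : Fin r → R0 r))) := by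
          refine TwoSidedIdeal.mem_span_iff.mp hb _ ?_
          rintro _ ⟨i, rfl⟩
          rw [SetLike.mem_coe, mem_PhiTwo]
          refine Ideal.subset_span ⟨X i, Ideal.subset_span ⟨i, rfl⟩, ?_⟩
          rw [Phi_X]
          rfl
        rwa [mem_PhiTwo] at hb2
      have ha' : a ∈ PhiIdeal B ((Ideal.span (Set.range (X : Fin r → R0 r)))^m) := by
        have := ih ha
        rwa [mem_PhiTwo] at this
      have := PhiIdeal_mul_mem B _ _ ha' hb'
      rwa [← pow_succ] at this


/-- For each `d` there exists `m` such that `L^m ⬝ J_d ⊆ J_{d+1}`. -/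
theorem statement6 (B : Type*) [Ring B] (r : ℕ)
    (s : ℤ → NCPoly B r) (hs0 : s 0 = 1) (hsneg : ∀ j : ℤ, j < 0 → s j = 0)
    (hsrec : ∀ j : ℤ, 0 < j → s j = -∑ i : Fin r, pvar B r i * s (j - ((i : ℕ) + 1)))
    (d : ℤ) :
    ∃ m : ℕ, imul (ipow (Lideal B r) m) (Jideal B r s d) ≤ Jideal B r s (d + 1) := by
  obtain ⟨m, hm⟩ := comm_key r d
  refine ⟨m, ?_⟩
  intro x hx
  refine TwoSidedIdeal.mem_span_iff.mp hx _ ?_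
  rintro z ⟨a, ha, b, hb, rfl⟩
  have ha2 : a ∈ Jideal B r s (d + 1) := by
    have h3 := (ipow_le_PhiTwo B r m) ha
    rw [mem_PhiTwo] at h3
    refine Submodule.span_induction ?_ ?_ ?_ ?_ h3
    · rintro _ ⟨y, hy, rfl⟩
      exact Phi_mem_Jideal B r s hs0 hsneg hsrec (d+1) (hm hy)
    · exact TwoSidedIdeal.zero_mem _
    · intro u v _ _ hu hv
      exact TwoSidedIdeal.add_mem _ hu hv
    · intro c z _ hz
      rw [smul_eq_mul]
      exact TwoSidedIdeal.mul_mem_left _ _ _ hz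
  exact SetLike.mem_coe.mpr (TwoSidedIdeal.mul_mem_right _ _ _ ha2)
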